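/- For each fixed 0 < λ < 1, there exists a unique μ_h = μ_h(λ) > 1 such that b(λ, μ_h) = 1; moreover 0 < b(λ,μ) < 1 for all 1 < μ < μ_h, and b(λ,μ) > 1 for all μ > μ_h. -/
import Mathlib


noncomputable section

/-- `x*` coordinate of the interior fixed point of Φ_{λ,μ}. -/
def xstar (l m : ℝ) : ℝ :=
  ((m⁻¹ - l - 1) + Real.sqrt ((1 + l - m⁻¹) ^ 2 + 4 * (1 - l))) / (2 * (1 - l))

/-- `b(λ,μ)`, the determinant of the Jacobian of Φ_{λ,μ} at its interior fixed point. -/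
def bdef (l m : ℝ) : ℝ :=
  m * ((l * (4 * m⁻¹ - 1) - 2 * (1 + m⁻¹)) * xstar l m + 2 * (1 - m⁻¹ * (l - m⁻¹)))

/-- Auxiliary quartic whose sign at `xstar` gives the sign of `bdef - 1`. -/
def qq (l x : ℝ) : ℝ := 2 - (2*l+3)*x + (l+1)*x^2 + (2*l^2-1)*x^3 + 2*l*(1-l)*x^4

lemma qq_neg (l x : ℝ) (hl0 : 0 < l) (hl1 : l < 1) (hx : 72/100 ≤ x) (hx1 : x ≤ 1) :
    qq l x < 0 := by
  unfold qq
  nlinarith [mul_nonneg (sub_pos.2 hl1).le (sub_nonneg.2 hx1), sq_nonneg (1-x),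
    sq_nonneg (x-72/100), mul_nonneg (sub_nonneg.2 hx) (sub_nonneg.2 hx1),
    mul_nonneg (mul_nonneg (sub_nonneg.2 hx) (sub_nonneg.2 hx1)) hl0.le,
    mul_nonneg (sub_nonneg.2 hx1) (sub_pos.2 hl1).le, sq_nonneg (1-l),
    mul_pos hl0 (sub_pos.2 hl1),
    mul_nonneg (mul_nonneg (sub_nonneg.2 hx1) (sub_pos.2 hl1).le) hl0.le,
    mul_nonneg (mul_nonneg (sub_nonneg.2 hx1) (sub_nonneg.2 hx1)) (sub_pos.2 hl1).le]

lemma qq_dec (l x y : ℝ) (hl0 : 0 < l) (hl1 : l < 1) (hx0 : 0 < x) (hxy : x < y)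
    (hy : y ≤ 72/100) : qq l y < qq l x := by
  have hy0 : 0 < y := hx0.trans hxy
  have hx : x ≤ 72/100 := le_of_lt (lt_of_lt_of_le hxy hy)
  have hs3 : x^3 + x^2*y + x*y^2 + y^3 ≤ 4*(72/100)^3 := by
    nlinarith [mul_nonneg (mul_nonneg hx0.le hx0.le) hy0.le,
      mul_nonneg hx0.le (mul_nonneg hy0.le hy0.le), sq_nonneg x, sq_nonneg y,
      mul_nonneg (sub_nonneg.2 hx) (mul_nonneg hx0.le hy0.le),
      mul_nonneg (sub_nonneg.2 hy) (mul_nonneg hx0.le hy0.le),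
      mul_nonneg (sub_nonneg.2 hx) (sq_nonneg x), mul_nonneg (sub_nonneg.2 hy) (sq_nonneg y),
      mul_nonneg (sub_nonneg.2 hx) (sq_nonneg y), mul_nonneg (sub_nonneg.2 hy) (sq_nonneg x),
      mul_nonneg (sub_nonneg.2 hx) (sub_nonneg.2 hy), sq_nonneg (x-y), sq_nonneg (x+y)]
  have hs3n : 0 ≤ x^3 + x^2*y + x*y^2 + y^3 := by positivity
  have hs2 : x^2 + x*y + y^2 ≤ 3*(72/100)^2 := by
    nlinarith [mul_nonneg (sub_nonneg.2 hx) (sub_nonneg.2 hy), sq_nonneg (x-y)]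
  have hs2n : 0 ≤ x^2 + x*y + y^2 := by positivity
  have hG : 0 < (2*l+3) - (l+1)*(x+y) - (2*l^2-1)*(x^2+x*y+y^2)
      - 2*l*(1-l)*(x^3+x^2*y+x*y^2+y^3) := by
    rcases le_or_gt (2*l^2) 1 with h | h
    · nlinarith [mul_nonneg (sub_nonneg.2 h) hs2n,
        mul_nonneg (mul_nonneg hl0.le (sub_pos.2 hl1).le) (sub_nonneg.2 hs3),
        sq_nonneg (1-2*l)]
    · nlinarith [mul_nonneg (sub_nonneg.2 h.le) (sub_nonneg.2 hs2),
        mul_nonneg (mul_nonneg hl0.le (sub_pos.2 hl1).le) (sub_nonneg.2 hs3),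
        sq_nonneg (1-2*l), sq_nonneg (1-l)]
  have hdiff : qq l x - qq l y = (y - x) * ((2*l+3) - (l+1)*(x+y)
      - (2*l^2-1)*(x^2+x*y+y^2) - 2*l*(1-l)*(x^3+x^2*y+x*y^2+y^3)) := by unfold qq; ring
  nlinarith [mul_pos (sub_pos.2 hxy) hG]

lemma pp_pos (l x : ℝ) (hl0 : 0 < l) (hl1 : l < 1) (hx0 : 0 < x) (hx1 : x < 1) :
    0 < qq l x + ((1-l)*x^2+(1+l)*x-1)*x := by
  unfold qq
  rcases le_or_gt x (1/2) with h | h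
  · nlinarith [sq_nonneg (1-x-l*x), mul_pos hl0 hx0,
      mul_nonneg (mul_nonneg hl0.le hx0.le) (sub_nonneg.2 h), sq_nonneg (1-2*x),
      mul_pos (mul_pos hl0 hx0) hx0,
      mul_nonneg (mul_nonneg (mul_nonneg hl0.le hx0.le) hx0.le) hx0.le,
      mul_pos hl0 (sub_pos.2 hl1)]
  · nlinarith [sq_nonneg (1-x-l*x),
      mul_nonneg (mul_nonneg (mul_nonneg hl0.le hx0.le) hx0.le)
        (mul_nonneg hx0.le (sub_nonneg.2 (by linarith : (1:ℝ)/2 ≤ x))),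
      mul_nonneg (mul_nonneg (mul_nonneg (mul_nonneg hl0.le hl0.le) hx0.le) hx0.le)
        (mul_nonneg hx0.le (sub_pos.2 hx1).le),
      sq_nonneg (1-x), mul_pos hl0 hx0,
      mul_nonneg (mul_nonneg hl0.le hx0.le) (sub_pos.2 hx1).le,
      sq_nonneg (l*x - x), sq_nonneg (l*x^2 - 1 + x)]

lemma xstar_quad (l m : ℝ) (hl0 : 0 < l) (hl1 : l < 1) (hm : 1 < m) :
    (1-l) * (xstar l m)^2 + (1+l-m⁻¹) * (xstar l m) - 1 = 0 ∧
      0 < xstar l m ∧ xstar l m < 1 := by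
  set t := m⁻¹ with ht
  have ht0 : 0 < t := by positivity
  have ht1 : t < 1 := by rw [ht]; rw [inv_lt_one_iff₀]; right; exact hm
  have hD : (0:ℝ) ≤ (1 + l - t) ^ 2 + 4 * (1 - l) := by nlinarith
  set s := Real.sqrt ((1 + l - t) ^ 2 + 4 * (1 - l)) with hs
  have hs2 : s^2 = (1 + l - t) ^ 2 + 4 * (1 - l) := Real.sq_sqrt hD
  have hs0 : 0 ≤ s := Real.sqrt_nonneg _
  have hne : (1:ℝ) - l ≠ 0 := by linarith
  have hx : xstar l m = ((t - l - 1) + s) / (2 * (1 - l)) := rfl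
  have hsgt : 1 + l - t < s := by nlinarith
  have hx0 : 0 < xstar l m := by
    rw [hx]; apply div_pos; linarith; linarith
  have hq : (1-l) * (xstar l m)^2 + (1+l-t) * (xstar l m) - 1 = 0 := by
    rw [hx]; field_simp; nlinarith [hs2]
  refine ⟨hq, hx0, ?_⟩
  by_contra hc
  push_neg at hc
  nlinarith [hq, mul_nonneg (mul_nonneg (sub_pos.2 hl1).le
      (by linarith : (0:ℝ) ≤ xstar l m - 1)) hx0.le,
    mul_nonneg (by nlinarith : (0:ℝ) ≤ 1 + l - t)
      (by linarith : (0:ℝ) ≤ xstar l m - 1)]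

lemma bdef_eq (l m : ℝ) (hl0 : 0 < l) (hl1 : l < 1) (hm : 1 < m) :
    (bdef l m - 1) * (m⁻¹ * (xstar l m)^2) = qq l (xstar l m) := by
  obtain ⟨hq, hx0, hx1⟩ := xstar_quad l m hl0 hl1 hm
  have hm0 : m ≠ 0 := by positivity
  have hm1 : m * m⁻¹ = 1 := mul_inv_cancel₀ hm0
  set t := m⁻¹
  set x := xstar l m
  unfold bdef qq
  linear_combination (((l*(4*t-1)-2*(1+t))*x + 2*(1-t*(l-t)))*x^2) * hm1 +
    (-2*x*t - 2*l*x^2 - x + 2) * hq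

lemma xstar_anti (l m₁ m₂ : ℝ) (hl0 : 0 < l) (hl1 : l < 1) (hm1 : 1 < m₁)
    (hmm : m₁ < m₂) : xstar l m₂ < xstar l m₁ := by
  have hm2 : 1 < m₂ := hm1.trans hmm
  obtain ⟨hq1, hx10, hx11⟩ := xstar_quad l m₁ hl0 hl1 hm1
  obtain ⟨hq2, hx20, hx21⟩ := xstar_quad l m₂ hl0 hl1 hm2
  set x₁ := xstar l m₁
  set x₂ := xstar l m₂
  have ht : m₂⁻¹ < m₁⁻¹ := by
    exact inv_strictAnti₀ (by linarith) hmm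
  have key : (m₂⁻¹ - m₁⁻¹) * (x₁ * x₂) = (x₂ - x₁) * ((1-l)*x₁*x₂ + 1) := by
    linear_combination x₂ * hq1 - x₁ * hq2
  have hbr : 0 < (1-l)*x₁*x₂ + 1 := by
    have : 0 < (1-l)*x₁*x₂ := by
      apply mul_pos (mul_pos (by linarith) hx10) hx20
    linarith
  have hlt : (m₂⁻¹ - m₁⁻¹) * (x₁ * x₂) < 0 :=
    mul_neg_of_neg_of_pos (by linarith) (mul_pos hx10 hx20)
  nlinarith [key, hlt, hbr]

lemma bdef_gt_one_iff (l m : ℝ) (hl0 : 0 < l) (hl1 : l < 1) (hm : 1 < m) :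
    (1 < bdef l m ↔ 0 < qq l (xstar l m)) ∧ (bdef l m < 1 ↔ qq l (xstar l m) < 0) := by
  have heq := bdef_eq l m hl0 hl1 hm
  obtain ⟨_, hx0, _⟩ := xstar_quad l m hl0 hl1 hm
  have hp : 0 < m⁻¹ * (xstar l m)^2 := by
    apply mul_pos (by positivity) (by positivity)
  constructor
  · constructor
    · intro h; rw [← heq]; exact mul_pos (by linarith) hp
    · intro h; nlinarith
  · constructor
    · intro h; rw [← heq]; exact mul_neg_of_neg_of_pos (by linarith) hp
    · intro h; nlinarith

lemma bdef_cross (l m₁ m₂ : ℝ) (hl0 : 0 < l) (hl1 : l < 1) (hm1 : 1 < m₁)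
    (hmm : m₁ < m₂) (hb1 : 1 ≤ bdef l m₁) : 1 < bdef l m₂ := by
  have hm2 : 1 < m₂ := hm1.trans hmm
  obtain ⟨hq1, hx10, hx11⟩ := xstar_quad l m₁ hl0 hl1 hm1
  obtain ⟨hq2, hx20, hx21⟩ := xstar_quad l m₂ hl0 hl1 hm2
  have heq1 := bdef_eq l m₁ hl0 hl1 hm1
  have hp1 : 0 < m₁⁻¹ * (xstar l m₁)^2 := by
    apply mul_pos (by positivity) (by positivity)
  have hq1nn : 0 ≤ qq l (xstar l m₁) := by nlinarith
  have hx1lt : xstar l m₁ < 72/100 := by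
    by_contra hc
    push_neg at hc
    exact absurd hq1nn (not_le.2 (qq_neg l (xstar l m₁) hl0 hl1 hc hx11.le))
  have hanti := xstar_anti l m₁ m₂ hl0 hl1 hm1 hmm
  have hdec := qq_dec l (xstar l m₂) (xstar l m₁) hl0 hl1 hx20 hanti (by linarith)
  exact ((bdef_gt_one_iff l m₂ hl0 hl1 hm2).1).2 (by linarith)

set_option maxHeartbeats 1000000 in
lemma qc_pos (l : ℝ) (hl0 : 0 < l) (hl1 : l < 1) : 0 < qq l (13/20 - 3/25*l) := by
  unfold qq
  ring_nf
  nlinarith [sq_nonneg l, sq_nonneg (1-l), mul_pos hl0 (sub_pos.2 hl1),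
    sq_nonneg (l*(1-l)), mul_nonneg (mul_nonneg hl0.le hl0.le) (sub_pos.2 hl1).le,
    mul_nonneg (mul_nonneg hl0.le hl0.le) hl0.le, sq_nonneg (l-1/2),
    mul_nonneg (mul_nonneg (mul_nonneg hl0.le hl0.le) hl0.le) (sub_pos.2 hl1).le]

lemma bdef_contOn (l : ℝ) : ContinuousOn (fun m => bdef l m) {m : ℝ | m ≠ 0} := by
  unfold bdef xstar
  fun_prop (disch := simp +contextual)

set_option maxHeartbeats 1000000 in
/-- For each 0 < λ < 1 there is a unique μ_h > 1 with b(λ,μ_h) = 1; moreover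
0 < b(λ,μ) < 1 for 1 < μ < μ_h and b(λ,μ) > 1 for μ > μ_h. -/
theorem stmt_15 (l : ℝ) (hl0 : 0 < l) (hl1 : l < 1) :
    ∃ μh : ℝ, 1 < μh ∧ bdef l μh = 1 ∧
      (∀ μ : ℝ, 1 < μ → μ < μh → 0 < bdef l μ ∧ bdef l μ < 1) ∧
      (∀ μ : ℝ, μh < μ → 1 < bdef l μ) ∧
      (∀ μ' : ℝ, 1 < μ' → bdef l μ' = 1 → μ' = μh) := by
  -- negative witness at μ = 10/7
  have hneg : bdef l (10/7) < 1 := by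
    have hm : (1:ℝ) < 10/7 := by norm_num
    obtain ⟨hq, hx0, hx1⟩ := xstar_quad l (10/7) hl0 hl1 hm
    have hti : ((10:ℝ)/7)⁻¹ = 7/10 := by norm_num
    rw [hti] at hq
    set X := xstar l (10/7) with hX
    have hxlb : 72/100 ≤ X := by
      by_contra hc
      push_neg at hc
      nlinarith [mul_nonneg (sub_pos.2 hl1).le
          (mul_nonneg (sub_nonneg.2 hc.le) (by linarith : (0:ℝ) ≤ 72/100 + X)),
        mul_nonneg (by linarith : (0:ℝ) ≤ 3/10 + l) (sub_nonneg.2 hc.le)]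
    exact ((bdef_gt_one_iff l (10/7) hl0 hl1 hm).2).2
      (qq_neg l X hl0 hl1 hxlb hx1.le)
  -- positive witness at μ = c/w
  set c : ℝ := 13/20 - 3/25*l with hc_def
  set w : ℝ := (1-l)*c^2 + (1+l)*c - 1 with hw_def
  have hc0 : 0 < c := by rw [hc_def]; nlinarith
  have hw0 : 0 < w := by
    rw [hw_def, hc_def]
    nlinarith [sq_nonneg l, sq_nonneg (1-l), mul_pos hl0 (sub_pos.2 hl1), sq_nonneg (l-1/2), mul_nonneg (mul_nonneg hl0.le hl0.le) (sub_pos.2 hl1).le]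
  have hwc : w < c := by rw [hw_def, hc_def]; nlinarith
  have hμp : 1 < c/w := (one_lt_div hw0).2 hwc
  have hap : (10:ℝ)/7 < c/w := by
    rw [lt_div_iff₀ hw0]
    rw [hw_def, hc_def]; nlinarith
  have hpos : 1 < bdef l (c/w) := by
    obtain ⟨hq, hx0, hx1⟩ := xstar_quad l (c/w) hl0 hl1 hμp
    have hti : (c/w)⁻¹ = w/c := by rw [inv_div]
    rw [hti] at hq
    have hqc : (1-l) * c^2 + (1+l-w/c) * c - 1 = 0 := by
      have h1 : (1+l-w/c)*c = (1+l)*c - w := by field_simp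
      rw [h1, hw_def]; ring
    have hfac : (xstar l (c/w) - c) * ((1-l)*(xstar l (c/w)+c) + (1+l-w/c)) = 0 := by
      linear_combination hq - hqc
    have hwc1 : w/c < 1 := (div_lt_one hc0).2 hwc
    have hbr : 0 < (1-l)*(xstar l (c/w)+c) + (1+l-w/c) := by
      have h2 : 0 < (1-l)*(xstar l (c/w)+c) := mul_pos (by linarith) (by linarith)
      linarith
    have hxc : xstar l (c/w) = c := by
      rcases mul_eq_zero.1 hfac with h | h
      · linarith
      · linarith
    apply ((bdef_gt_one_iff l (c/w) hl0 hl1 hμp).1).2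
    rw [hxc, hc_def]
    exact qc_pos l hl0 hl1
  -- IVT
  have hcont : ContinuousOn (fun m => bdef l m) (Set.Icc ((10:ℝ)/7) (c/w)) := by
    apply (bdef_contOn l).mono
    intro m hm
    have : (10:ℝ)/7 ≤ m := hm.1
    simp only [Set.mem_setOf_eq]
    intro h; rw [h] at this; norm_num at this
  have hIvt := intermediate_value_Ioo (le_of_lt hap) hcont
  have h1mem : (1:ℝ) ∈ Set.Ioo (bdef l (10/7)) (bdef l (c/w)) := ⟨hneg, hpos⟩
  obtain ⟨μh, hμh_mem, hgμh'⟩ := hIvt h1mem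
  have hgμh : bdef l μh = 1 := hgμh'
  have hμh1 : 1 < μh := by
    have := hμh_mem.1; norm_num at this ⊢; linarith
  refine ⟨μh, hμh1, hgμh, ?_, ?_, ?_⟩
  · intro μ hμ1 hμμh
    constructor
    · -- positivity of bdef
      have heq := bdef_eq l μ hl0 hl1 hμ1
      obtain ⟨hq, hx0, hx1⟩ := xstar_quad l μ hl0 hl1 hμ1
      have hP := pp_pos l (xstar l μ) hl0 hl1 hx0 hx1
      have hμinv : μ⁻¹ * (xstar l μ)^2
          = ((1-l)*(xstar l μ)^2+(1+l)*(xstar l μ)-1)*(xstar l μ) := by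
        linear_combination (-(xstar l μ)) * hq
      have hp : 0 < μ⁻¹ * (xstar l μ)^2 := mul_pos (by positivity) (by positivity)
      have hqp : 0 < qq l (xstar l μ) + μ⁻¹ * (xstar l μ)^2 := by
        rw [hμinv]; exact hP
      set q := qq l (xstar l μ)
      set p := μ⁻¹ * (xstar l μ)^2
      nlinarith [heq, hp, hqp]
    · by_contra hcge
      push_neg at hcge
      have := bdef_cross l μ μh hl0 hl1 hμ1 hμμh hcge
      linarith [hgμh, this]
  · intro μ hμhμ
    exact bdef_cross l μh μ hl0 hl1 hμh1 hμhμ (le_of_eq hgμh.symm)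
  · intro μ' hμ'1 hbμ'
    rcases lt_trichotomy μ' μh with h | h | h
    · have := bdef_cross l μ' μh hl0 hl1 hμ'1 h (le_of_eq hbμ'.symm)
      linarith
    · exact h
    · have := bdef_cross l μh μ' hl0 hl1 hμh1 h (le_of_eq hgμh.symm)
      linarith
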